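/- There exists an absolute constant c > 0 with the following property. Let d, n ≥ 1 and k ≥ 1 be integers, R > 0, α ≥ 1, β ∈ (0,1], δ ∈ (0,1/2), and ε ∈ (0,R]. Let x_1,…,x_n lie in the closed ball B(0,R) ⊂ ℝ^d, and let U ∈ [0,1]^{n×k} be a feasible membership matrix with Σ_{i=1}^n U_{ij} ≥ βn/k for every j ∈ [k]. Let μ_j = (Σ_{i=1}^n U_{ij}^α x_i)/(Σ_{i=1}^n U_{ij}^α) for each j ∈ [k]. If m ≥ c·(Rk^α/(εβ^α))⁴·log(k/δ) and I_1,…,I_m are independent random indices, each uniformly distributed on {1,…,n}, then with probability at least 1 − δ the following holds simultaneously for every j ∈ [k]: Σ_{p=1}^m U_{I_p j}^α > 0 and the estimator μ̂_j = (Σ_{p=1}^m U_{I_p j}^α x_{I_p})/(Σ_{p=1}^m U_{I_p j}^α) satisfies ‖μ̂_j − μ_j‖₂ ≤ ε. -/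

import Mathlib

open scoped BigOperators
open MeasureTheory ProbabilityTheory
open Finset
open scoped ENNReal NNReal


open Finset

/-- `e^t ≤ 1 + t + t²` for `|t| ≤ 1`. -/
lemma exp_le_quadratic {t : ℝ} (ht : |t| ≤ 1) : Real.exp t ≤ 1 + t + t ^ 2 := by
  have h := Real.exp_bound ht (n := 2) (by norm_num)
  have h2 : ∑ m ∈ range 2, t ^ m / m.factorial = 1 + t := by
    simp [Finset.sum_range_succ]
  rw [h2] at h
  have h4 := (abs_sub_le_iff.1 h).1
  have h5 : |t| ^ 2 * (((2:ℕ).succ : ℝ) / ((2:ℕ).factorial * 2)) ≤ t ^ 2 := by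
    rw [sq_abs]
    have : (((2:ℕ).succ : ℝ) / ((2:ℕ).factorial * 2)) = 3/4 := by
      norm_num [Nat.factorial]
    rw [this]
    nlinarith [sq_nonneg t]
  linarith

/-- Sum decomposition over `Fin (m+1) → Fin n` via `Fin.cons`. -/
lemma sum_cons_decomp {n m : ℕ} {M : Type*} [AddCommMonoid M]
    (f : (Fin (m+1) → Fin n) → M) :
    ∑ i : Fin (m+1) → Fin n, f i = ∑ x : Fin n, ∑ i' : Fin m → Fin n, f (Fin.cons x i') := by
  calc ∑ i : Fin (m+1) → Fin n, f i
      = ∑ p : Fin n × (Fin m → Fin n), f ((Fin.consEquiv fun _ => Fin n) p) :=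
        (Fintype.sum_equiv (Fin.consEquiv fun _ => Fin n) _ _ (fun p => rfl)).symm
    _ = ∑ x : Fin n, ∑ i' : Fin m → Fin n, f (Fin.cons x i') := by
        rw [Fintype.sum_prod_type]; rfl

/-- Per-step Hoeffding-type bound over a uniform finite coordinate. -/
lemma step_bound {n : ℕ} {u : Fin n → ℝ} {D lam : ℝ}
    (hsum : ∑ x, u x = 0) (hu : ∀ x, |u x| ≤ D) (hl : |lam| * D ≤ 1) :
    ∑ x, Real.exp (lam * u x) ≤ (n : ℝ) * Real.exp (lam ^ 2 * D ^ 2) := by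
  have key : ∀ x, Real.exp (lam * u x) ≤ 1 + lam * u x + lam ^ 2 * D ^ 2 := by
    intro x
    have h1 : |lam * u x| ≤ 1 := by
      rw [abs_mul]
      calc |lam| * |u x| ≤ |lam| * D :=
            mul_le_mul_of_nonneg_left (hu x) (abs_nonneg _)
        _ ≤ 1 := hl
    have h2 := exp_le_quadratic h1
    have hsq : u x ^ 2 ≤ D ^ 2 :=
      sq_le_sq' (by linarith [(abs_le.1 (hu x)).1]) (abs_le.1 (hu x)).2
    have h3 : (lam * u x) ^ 2 ≤ lam ^ 2 * D ^ 2 := by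
      have := mul_le_mul_of_nonneg_left hsq (sq_nonneg lam)
      nlinarith
    linarith
  calc ∑ x, Real.exp (lam * u x) ≤ ∑ x, (1 + lam * u x + lam ^ 2 * D ^ 2) :=
        Finset.sum_le_sum fun x _ => key x
    _ = (n : ℝ) * (1 + lam ^ 2 * D ^ 2) := by
        rw [Finset.sum_add_distrib, Finset.sum_add_distrib, ← Finset.mul_sum, hsum]
        simp [mul_comm]; ring
    _ ≤ (n : ℝ) * Real.exp (lam ^ 2 * D ^ 2) := by
        apply mul_le_mul_of_nonneg_left _ (Nat.cast_nonneg n)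
        nlinarith [Real.add_one_le_exp (lam ^ 2 * D ^ 2)]
/-- McDiarmid-style mgf bound over the uniform counting "measure" on `(Fin n)^m`. -/
lemma mgf_bound {n : ℕ} (hn : 1 ≤ n) {D lam : ℝ} (hl : |lam| * D ≤ 1) :
    ∀ (m : ℕ) (G : (Fin m → Fin n) → ℝ),
      (∀ (p : Fin m) (i j : Fin m → Fin n), (∀ q, q ≠ p → i q = j q) → |G i - G j| ≤ D) →
      ∑ i, Real.exp (lam * G i) ≤
        (n : ℝ) ^ m * Real.exp (lam * ((∑ i, G i) / (n : ℝ) ^ m) + m * (lam ^ 2 * D ^ 2)) := by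
  intro m
  induction m with
  | zero =>
    intro G _
    simp
  | succ m ih =>
    intro G hG
    have hn0 : (0:ℝ) < (n:ℝ) := by exact_mod_cast hn
    have hnm : (0:ℝ) < (n:ℝ) ^ m := pow_pos hn0 m
    set h : (Fin m → Fin n) → ℝ := fun i' => (∑ x, G (Fin.cons x i')) / n with hh
    -- coordinate oscillation of h
    have hosc : ∀ (p : Fin m) (i j : Fin m → Fin n), (∀ q, q ≠ p → i q = j q) →
        |h i - h j| ≤ D := by
      intro p i j hij
      have : h i - h j = (∑ x, (G (Fin.cons x i) - G (Fin.cons x j))) / n := by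
        rw [hh]; rw [Finset.sum_sub_distrib]; ring
      rw [this, abs_div, abs_of_pos hn0, div_le_iff₀ hn0]
      calc |∑ x, (G (Fin.cons x i) - G (Fin.cons x j))|
          ≤ ∑ x, |G (Fin.cons x i) - G (Fin.cons x j)| := Finset.abs_sum_le_sum_abs _ _
        _ ≤ ∑ _x : Fin n, D := by
            apply Finset.sum_le_sum
            intro x _
            apply hG p.succ
            intro q
            refine Fin.cases ?_ ?_ q
            · intro _; simp
            · intro q' hq
              simp only [Fin.cons_succ]
              exact hij q' (fun hc => hq (by rw [hc]))
        _ = D * n := by simp [mul_comm]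
    -- the per-coordinate exponential bound
    have hstep : ∀ i' : Fin m → Fin n,
        ∑ x, Real.exp (lam * G (Fin.cons x i')) ≤
          Real.exp (lam * h i') * ((n:ℝ) * Real.exp (lam ^ 2 * D ^ 2)) := by
      intro i'
      have hu0 : ∑ x, (G (Fin.cons x i') - h i') = 0 := by
        rw [Finset.sum_sub_distrib]
        simp [hh]
        field_simp
        simp
      have huD : ∀ x, |G (Fin.cons x i') - h i'| ≤ D := by
        intro x
        have : G (Fin.cons x i') - h i' =
            (∑ y, (G (Fin.cons x i') - G (Fin.cons y i'))) / n := by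
          rw [hh, Finset.sum_sub_distrib]
          rw [Finset.sum_const]
          field_simp
          ring
          simp
        rw [this, abs_div, abs_of_pos hn0, div_le_iff₀ hn0]
        calc |∑ y, (G (Fin.cons x i') - G (Fin.cons y i'))|
            ≤ ∑ y, |G (Fin.cons x i') - G (Fin.cons y i')| := Finset.abs_sum_le_sum_abs _ _
          _ ≤ ∑ _y : Fin n, D := by
              apply Finset.sum_le_sum
              intro y _
              apply hG 0
              intro q
              refine Fin.cases (fun h => absurd rfl h) (fun q' _ => by simp) q
          _ = D * n := by simp [mul_comm]
      calc ∑ x, Real.exp (lam * G (Fin.cons x i'))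
          = ∑ x, Real.exp (lam * h i') * Real.exp (lam * (G (Fin.cons x i') - h i')) := by
            apply Finset.sum_congr rfl
            intro x _
            rw [← Real.exp_add]
            ring_nf
        _ = Real.exp (lam * h i') * ∑ x, Real.exp (lam * (G (Fin.cons x i') - h i')) := by
            rw [Finset.mul_sum]
        _ ≤ Real.exp (lam * h i') * ((n:ℝ) * Real.exp (lam ^ 2 * D ^ 2)) := by
            apply mul_le_mul_of_nonneg_left _ (Real.exp_nonneg _)
            exact step_bound hu0 huD hl
    -- combine with inductive hypothesis
    have havg : ∑ i', h i' = (∑ i, G i) / n := by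
      rw [sum_cons_decomp G, hh]
      rw [← Finset.sum_div]
      rw [Finset.sum_comm]
    calc ∑ i, Real.exp (lam * G i)
        = ∑ x, ∑ i', Real.exp (lam * G (Fin.cons x i')) :=
          sum_cons_decomp (fun i => Real.exp (lam * G i))
      _ = ∑ i', ∑ x, Real.exp (lam * G (Fin.cons x i')) := Finset.sum_comm
      _ ≤ ∑ i', Real.exp (lam * h i') * ((n:ℝ) * Real.exp (lam ^ 2 * D ^ 2)) :=
          Finset.sum_le_sum fun i' _ => hstep i'
      _ = ((n:ℝ) * Real.exp (lam ^ 2 * D ^ 2)) * ∑ i', Real.exp (lam * h i') := by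
          rw [← Finset.sum_mul]; ring
      _ ≤ ((n:ℝ) * Real.exp (lam ^ 2 * D ^ 2)) *
            ((n : ℝ) ^ m * Real.exp (lam * ((∑ i', h i') / (n : ℝ) ^ m) + m * (lam ^ 2 * D ^ 2))) := by
          apply mul_le_mul_of_nonneg_left (ih h hosc)
          positivity
      _ = (n : ℝ) ^ (m+1) *
            Real.exp (lam * ((∑ i, G i) / ((n : ℝ) ^ (m+1))) + ((m:ℝ)+1) * (lam ^ 2 * D ^ 2)) := by
          rw [havg]
          have harg : (∑ i, G i) / (n:ℝ) / (n:ℝ)^m = (∑ i, G i) / (n:ℝ)^(m+1) := by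
            rw [div_div, ← pow_succ']
          rw [harg]
          rw [show ((n:ℝ) * Real.exp (lam ^ 2 * D ^ 2)) *
              ((n : ℝ) ^ m * Real.exp (lam * ((∑ i, G i) / (n:ℝ)^(m+1)) + m * (lam ^ 2 * D ^ 2)))
              = ((n:ℝ) * (n:ℝ)^m) * (Real.exp (lam ^ 2 * D ^ 2) *
                Real.exp (lam * ((∑ i, G i) / (n:ℝ)^(m+1)) + m * (lam ^ 2 * D ^ 2))) from by ring]
          rw [← Real.exp_add, ← pow_succ']
          congr 1
          ring
      _ = (n : ℝ) ^ (m+1) *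
            Real.exp (lam * ((∑ i, G i) / (n : ℝ) ^ (m+1)) + ((m+1 : ℕ):ℝ) * (lam ^ 2 * D ^ 2)) := by
          push_cast
          ring_nf
section VectorPart
variable {V : Type*} [NormedAddCommGroup V] [InnerProductSpace ℝ V]

lemma card_fun_fin (n m : ℕ) : (Finset.univ : Finset (Fin m → Fin n)).card = n ^ m := by
  simp [Finset.card_univ]

/-- Second moment bound for sums of centered bounded vectors over uniform counting. -/
lemma second_moment {n : ℕ} {ξ : Fin n → V} {B : ℝ} (hB0 : 0 ≤ B)
    (hξ0 : ∑ a, ξ a = 0) (hB : ∀ a, ‖ξ a‖ ≤ B) :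
    ∀ m : ℕ, ∑ i : Fin m → Fin n, ‖∑ p, ξ (i p)‖ ^ 2 ≤ (n : ℝ) ^ m * (m * B ^ 2) := by
  intro m
  induction m with
  | zero => simp
  | succ m ih =>
    set A : (Fin m → Fin n) → V := fun i' => ∑ p, ξ (i' p) with hA
    have hsplit : ∀ (x : Fin n) (i' : Fin m → Fin n),
        ‖∑ p : Fin (m+1), ξ ((Fin.cons x i' : Fin (m+1) → Fin n) p)‖ ^ 2 =
          ‖ξ x‖ ^ 2 + 2 * (inner ℝ (ξ x) (A i') : ℝ) + ‖A i'‖ ^ 2 := by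
      intro x i'
      have hs : ∑ p : Fin (m+1), ξ ((Fin.cons x i' : Fin (m+1) → Fin n) p) = ξ x + A i' := by
        rw [Fin.sum_univ_succ]
        simp [hA]
      rw [hs]
      exact norm_add_sq_real _ _
    calc ∑ i : Fin (m+1) → Fin n, ‖∑ p, ξ (i p)‖ ^ 2
        = ∑ x : Fin n, ∑ i' : Fin m → Fin n,
            (‖ξ x‖ ^ 2 + 2 * (inner ℝ (ξ x) (A i') : ℝ) + ‖A i'‖ ^ 2) := by
          rw [sum_cons_decomp (fun i => ‖∑ p, ξ (i p)‖ ^ 2)]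
          exact Finset.sum_congr rfl fun x _ => Finset.sum_congr rfl fun i' _ => hsplit x i'
      _ = (∑ x : Fin n, ∑ _i' : Fin m → Fin n, ‖ξ x‖ ^ 2)
            + 2 * (inner ℝ (∑ x, ξ x) (∑ i', A i') : ℝ)
            + ∑ _x : Fin n, ∑ i', ‖A i'‖ ^ 2 := by
          simp only [Finset.sum_add_distrib]
          congr 1
          congr 1
          simp_rw [← Finset.mul_sum, ← inner_sum, ← sum_inner]
      _ = (∑ x : Fin n, (n:ℝ) ^ m * ‖ξ x‖ ^ 2) + (n:ℝ) * ∑ i', ‖A i'‖ ^ 2 := by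
          rw [hξ0, inner_zero_left]
          simp only [Finset.sum_const, card_fun_fin, nsmul_eq_mul, Finset.card_univ,
            Fintype.card_fun, Fintype.card_fin]
          push_cast
          ring
      _ ≤ (n:ℝ) ^ m * ((n:ℝ) * B ^ 2) + (n:ℝ) * ((n : ℝ) ^ m * (m * B ^ 2)) := by
          apply add_le_add
          · rw [← Finset.mul_sum]
            apply mul_le_mul_of_nonneg_left _ (by positivity)
            calc ∑ x, ‖ξ x‖ ^ 2 ≤ ∑ _x : Fin n, B ^ 2 :=
                  Finset.sum_le_sum fun x _ =>
                    pow_le_pow_left₀ (norm_nonneg _) (hB x) 2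
              _ = (n:ℝ) * B ^ 2 := by simp [mul_comm]
          · exact mul_le_mul_of_nonneg_left ih (Nat.cast_nonneg n)
      _ = (n : ℝ) ^ (m+1) * ((m+1 : ℕ) * B ^ 2) := by
          push_cast
          ring
end VectorPart

/-- Tail bound via counting: Chernoff + McDiarmid-type mgf bound. -/
lemma tail_count {V : Type*} [NormedAddCommGroup V] [InnerProductSpace ℝ V]
    {n : ℕ} (hn : 1 ≤ n) {ξ : Fin n → V} {B : ℝ} (hB0 : 0 < B)
    (hξ0 : ∑ a, ξ a = 0) (hB : ∀ a, ‖ξ a‖ ≤ B) {m : ℕ} (hm : 1 ≤ m) {s : ℝ}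
    (hs0 : 0 ≤ s) (hs : s ≤ 4 * m * B) [DecidablePred fun i : Fin m → Fin n =>
      B * Real.sqrt m + s ≤ ‖∑ p, ξ (i p)‖] :
    ((Finset.univ.filter fun i : Fin m → Fin n =>
        B * Real.sqrt m + s ≤ ‖∑ p, ξ (i p)‖).card : ℝ)
      ≤ (n : ℝ) ^ m * Real.exp (-(s ^ 2) / (16 * m * B ^ 2)) := by
  have hm0 : (0:ℝ) < (m:ℝ) := by exact_mod_cast hm
  set G : (Fin m → Fin n) → ℝ := fun i => ‖∑ p, ξ (i p)‖ with hG
  set D : ℝ := 2 * B with hD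
  set lam : ℝ := s / (8 * m * B ^ 2) with hlam
  have hlam0 : 0 ≤ lam := by positivity
  have hlD : |lam| * D ≤ 1 := by
    rw [abs_of_nonneg hlam0, hlam, hD]
    rw [div_mul_eq_mul_div, div_le_one (by positivity)]
    nlinarith
  -- oscillation bound
  have hosc : ∀ (p : Fin m) (i j : Fin m → Fin n), (∀ q, q ≠ p → i q = j q) →
      |G i - G j| ≤ D := by
    intro p i j hij
    have h1 : |G i - G j| ≤ ‖(∑ q, ξ (i q)) - ∑ q, ξ (j q)‖ := abs_norm_sub_norm_le _ _
    have h2 : (∑ q, ξ (i q)) - ∑ q, ξ (j q) = ξ (i p) - ξ (j p) := by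
      rw [← Finset.sum_sub_distrib]
      rw [Finset.sum_eq_single p]
      · intro q _ hq
        rw [hij q hq, sub_self]
      · intro h; exact absurd (Finset.mem_univ p) h
    rw [h2] at h1
    calc |G i - G j| ≤ ‖ξ (i p) - ξ (j p)‖ := h1
      _ ≤ ‖ξ (i p)‖ + ‖ξ (j p)‖ := norm_sub_le _ _
      _ ≤ D := by rw [hD]; linarith [hB (i p), hB (j p)]
  -- mean bound
  have hnm : (0:ℝ) < (n:ℝ) ^ m := by positivity
  have hEG : (∑ i, G i) / (n:ℝ) ^ m ≤ B * Real.sqrt m := by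
    rw [div_le_iff₀ hnm]
    have hsq : (∑ i, G i) ^ 2 ≤ ((n:ℝ) ^ m) ^ 2 * ((m:ℝ) * B ^ 2) := by
      have h1 : (∑ i, G i) ^ 2 ≤
          ((Finset.univ : Finset (Fin m → Fin n)).card : ℝ) * ∑ i, G i ^ 2 :=
        sq_sum_le_card_mul_sum_sq
      have h2 : ∑ i, G i ^ 2 ≤ (n:ℝ) ^ m * ((m:ℝ) * B ^ 2) :=
        second_moment hB0.le hξ0 hB m
      rw [card_fun_fin] at h1
      have h3 : ((n ^ m : ℕ) : ℝ) = (n:ℝ) ^ m := by push_cast; ring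
      rw [h3] at h1
      nlinarith
    have hsum0 : 0 ≤ ∑ i, G i := Finset.sum_nonneg fun i _ => norm_nonneg _
    have hrhs0 : 0 ≤ B * Real.sqrt (m:ℝ) * (n:ℝ) ^ m := by positivity
    have hsqrt : (B * Real.sqrt (m:ℝ) * (n:ℝ) ^ m) ^ 2 = ((n:ℝ)^m)^2 * ((m:ℝ) * B^2) := by
      have := Real.sq_sqrt hm0.le
      nlinarith
    nlinarith
  -- Chernoff
  set F := Finset.univ.filter fun i : Fin m → Fin n =>
    B * Real.sqrt m + s ≤ ‖∑ p, ξ (i p)‖ with hF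
  have hcard : (F.card : ℝ) * Real.exp (lam * (B * Real.sqrt m + s)) ≤
      ∑ i, Real.exp (lam * G i) := by
    calc (F.card : ℝ) * Real.exp (lam * (B * Real.sqrt m + s))
        = ∑ _i ∈ F, Real.exp (lam * (B * Real.sqrt m + s)) := by
          rw [Finset.sum_const, nsmul_eq_mul]
      _ ≤ ∑ i ∈ F, Real.exp (lam * G i) := by
          apply Finset.sum_le_sum
          intro i hi
          apply Real.exp_le_exp.2
          apply mul_le_mul_of_nonneg_left _ hlam0
          exact (Finset.mem_filter.1 hi).2
      _ ≤ ∑ i, Real.exp (lam * G i) := by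
          apply Finset.sum_le_sum_of_subset_of_nonneg (Finset.filter_subset _ _)
          intro i _ _
          positivity
  have hmgf := mgf_bound hn hlD m G hosc
  have h4 : ∑ i, Real.exp (lam * G i) ≤
      (n:ℝ) ^ m * Real.exp (lam * (B * Real.sqrt m) + m * (lam ^ 2 * D ^ 2)) := by
    refine le_trans hmgf ?_
    apply mul_le_mul_of_nonneg_left _ hnm.le
    apply Real.exp_le_exp.2
    apply add_le_add_left
    exact mul_le_mul_of_nonneg_left hEG hlam0
  calc (F.card : ℝ)
      = ((F.card : ℝ) * Real.exp (lam * (B * Real.sqrt m + s))) *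
          Real.exp (-(lam * (B * Real.sqrt m + s))) := by
        rw [mul_assoc, ← Real.exp_add]; simp
    _ ≤ ((n:ℝ) ^ m * Real.exp (lam * (B * Real.sqrt m) + m * (lam ^ 2 * D ^ 2))) *
          Real.exp (-(lam * (B * Real.sqrt m + s))) :=
        mul_le_mul_of_nonneg_right (le_trans hcard h4) (Real.exp_nonneg _)
    _ = (n : ℝ) ^ m * Real.exp (-(s ^ 2) / (16 * m * B ^ 2)) := by
        rw [mul_assoc, ← Real.exp_add]
        congr 1
        rw [hlam, hD]
        field_simp
        ring

/-- Jensen's inequality for `rpow` over a uniform average. -/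
lemma rpow_mean_le {n : ℕ} (hn : 1 ≤ n) (U : Fin n → ℝ) (hU : ∀ i, U i ∈ Set.Icc (0:ℝ) 1)
    {α : ℝ} (hα : 1 ≤ α) {b : ℝ} (hb : 0 ≤ b) (hbU : b * n ≤ ∑ i, U i) :
    (n : ℝ) * b ^ α ≤ ∑ i, U i ^ α := by
  have hn0 : (0:ℝ) < n := by exact_mod_cast hn
  have hJ := Real.rpow_arith_mean_le_arith_mean_rpow Finset.univ (fun _ => 1/(n:ℝ)) U
    (fun i _ => by positivity) (by simp; field_simp) (fun i _ => (hU i).1) hα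
  have h1 : ∑ i, (1/(n:ℝ)) * U i = (∑ i, U i) / n := by
    rw [Finset.sum_div]
    exact Finset.sum_congr rfl fun i _ => by ring
  have h2 : ∑ i, (1/(n:ℝ)) * U i ^ α = (∑ i, U i ^ α) / n := by
    rw [Finset.sum_div]
    exact Finset.sum_congr rfl fun i _ => by ring
  rw [h1, h2] at hJ
  have h3 : b ≤ (∑ i, U i) / n := by rw [le_div_iff₀ hn0]; linarith
  have h4 : b ^ α ≤ ((∑ i, U i) / n) ^ α := Real.rpow_le_rpow hb h3 (by linarith)
  have h5 : b ^ α ≤ (∑ i, U i ^ α) / n := le_trans h4 hJ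
  rw [le_div_iff₀ hn0] at h5
  linarith


set_option maxHeartbeats 1000000 in
/-- Deterministic per-cluster estimate: if the sampled weight-sum and weighted-point-sum
are close to their means, the self-normalized estimate is `ε`-close to the true center. -/
lemma cluster_det {d n m : ℕ} (hn : 1 ≤ n) (hm : 1 ≤ m)
    {R ε a : ℝ} (hR : 0 < R) (hε0 : 0 < ε) (hεR : ε ≤ R) (ha0 : 0 < a)
    (w : Fin n → ℝ) (hw : ∀ i, w i ∈ Set.Icc (0:ℝ) 1)
    (x : Fin n → EuclideanSpace ℝ (Fin d)) (hx : ∀ i, ‖x i‖ ≤ R)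
    (hA : (n:ℝ) * a ≤ ∑ i', w i')
    (i : Fin m → Fin n)
    (h1 : |∑ p, (w (i p) - (∑ i', w i') / n)| ≤ ε * a * m / (4 * R))
    (h2 : ‖∑ p, (w (i p) • x (i p) - (n:ℝ)⁻¹ • ∑ i', w i' • x i')‖ ≤ ε * a * m / 4) :
    0 < ∑ p, w (i p) ∧
      ‖(∑ p, w (i p))⁻¹ • ∑ p, w (i p) • x (i p) -
        (∑ i', w i')⁻¹ • ∑ i', w i' • x i'‖ ≤ ε := by
  have hn0 : (0:ℝ) < n := by exact_mod_cast hn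
  have hm0 : (0:ℝ) < m := by exact_mod_cast hm
  set A : ℝ := ∑ i', w i' with hA_def
  set V : EuclideanSpace ℝ (Fin d) := ∑ i', w i' • x i' with hV_def
  set S : ℝ := ∑ p, w (i p) with hS_def
  set T : EuclideanSpace ℝ (Fin d) := ∑ p, w (i p) • x (i p) with hT_def
  have hA0 : 0 < A := lt_of_lt_of_le (by positivity) hA
  have hVR : ‖V‖ ≤ R * A := by
    rw [hV_def, hA_def]
    calc ‖∑ i', w i' • x i'‖ ≤ ∑ i', ‖w i' • x i'‖ := norm_sum_le _ _
      _ ≤ ∑ i', w i' * R := Finset.sum_le_sum fun i' _ => by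
          rw [norm_smul, Real.norm_eq_abs, abs_of_nonneg (hw i').1]
          exact mul_le_mul_of_nonneg_left (hx i') (hw i').1
      _ = R * ∑ i', w i' := by rw [← Finset.sum_mul, mul_comm]
  -- rewrite the deviations
  have hS1 : |S - (m:ℝ) * (A / n)| ≤ ε * a * m / (4 * R) := by
    have : ∑ p, (w (i p) - A / n) = S - (m:ℝ) * (A / n) := by
      rw [Finset.sum_sub_distrib, Finset.sum_const, Finset.card_univ, Fintype.card_fin,
        nsmul_eq_mul, hS_def]
    rwa [this] at h1
  have hT1 : ‖T - ((m:ℝ) / n) • V‖ ≤ ε * a * m / 4 := by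
    have : ∑ p, (w (i p) • x (i p) - (n:ℝ)⁻¹ • V) = T - ((m:ℝ) / n) • V := by
      rw [Finset.sum_sub_distrib, Finset.sum_const, Finset.card_univ, Fintype.card_fin,
        ← Nat.cast_smul_eq_nsmul ℝ, smul_smul, hT_def, div_eq_mul_inv]
    rwa [this] at h2
  -- lower bound on S
  have ht1a : ε * a * m / (4 * R) ≤ a * m / 4 := by
    rw [div_le_div_iff₀ (by positivity) (by positivity)]
    nlinarith [mul_nonneg (mul_nonneg (sub_nonneg.2 hεR) ha0.le) hm0.le]
  have hS_low : 3 / 4 * (m * a) ≤ S := by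
    have h3 : (m:ℝ) * a ≤ (m:ℝ) * (A / n) := by
      apply mul_le_mul_of_nonneg_left _ hm0.le
      rw [le_div_iff₀ hn0]
      linarith [hA]
    have h4 := abs_le.1 hS1
    nlinarith
  have hS0 : 0 < S := lt_of_lt_of_le (by positivity) hS_low
  refine ⟨hS0, ?_⟩
  -- decomposition
  have hid : S⁻¹ • T - A⁻¹ • V =
      S⁻¹ • (T - ((m:ℝ)/n) • V) + (((m:ℝ)/n)/S - A⁻¹) • V := by
    have hc : S⁻¹ * ((m:ℝ)/n) = ((m:ℝ)/n)/S := by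
      rw [div_eq_mul_inv ((m:ℝ)/n) S, mul_comm]
    rw [smul_sub, sub_smul, smul_smul, hc]
    abel
  rw [hid]
  have hterm1 : ‖S⁻¹ • (T - ((m:ℝ)/n) • V)‖ ≤ S⁻¹ * (ε * a * m / 4) := by
    rw [norm_smul, Real.norm_eq_abs, abs_of_pos (inv_pos.2 hS0)]
    exact mul_le_mul_of_nonneg_left hT1 (by positivity)
  have hcoef : |((m:ℝ)/n)/S - A⁻¹| ≤ (ε * a * m / (4 * R)) / (S * A) := by
    have he : ((m:ℝ)/n)/S - A⁻¹ = ((m:ℝ) * (A / n) - S) / (S * A) := by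
      rw [eq_div_iff (by positivity : (0:ℝ) < S * A).ne']
      field_simp
    rw [he, abs_div, abs_of_pos (by positivity : (0:ℝ) < S * A)]
    apply div_le_div_of_nonneg_right _ (by positivity)
    rw [abs_sub_comm]
    exact hS1
  have hterm2 : ‖(((m:ℝ)/n)/S - A⁻¹) • V‖ ≤ (ε * a * m / (4 * R)) / (S * A) * (R * A) := by
    rw [norm_smul, Real.norm_eq_abs]
    exact mul_le_mul hcoef hVR (norm_nonneg _) (by positivity)
  have heq2 : (ε * a * m / (4 * R)) / (S * A) * (R * A) = S⁻¹ * (ε * a * m / 4) := by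
    field_simp
  calc ‖S⁻¹ • (T - ((m:ℝ)/n) • V) + (((m:ℝ)/n)/S - A⁻¹) • V‖
      ≤ ‖S⁻¹ • (T - ((m:ℝ)/n) • V)‖ + ‖(((m:ℝ)/n)/S - A⁻¹) • V‖ := norm_add_le _ _
    _ ≤ S⁻¹ * (ε * a * m / 4) + S⁻¹ * (ε * a * m / 4) := by
        rw [heq2] at hterm2
        exact add_le_add hterm1 hterm2
    _ = (ε * a * m / 2) * S⁻¹ := by ring
    _ ≤ ε := by
        rw [← div_eq_mul_inv, div_le_iff₀ hS0]
        nlinarith [mul_le_mul_of_nonneg_left hS_low hε0.le]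

set_option maxHeartbeats 4000000 in
open MeasureTheory ProbabilityTheory in
/-- Lemma (estimate of all cluster means): there is an absolute constant `c > 0` such
that, if every cluster membership size is at least `βn/k` and the uniform sample size
satisfies `m ≥ c (Rk^α/(εβ^α))⁴ log(k/δ)`, then with probability at least `1 - δ` all
the self-normalized center estimates are within `ε` of the true centers. -/
theorem all_means_estimate :
    ∃ c : ℝ, 0 < c ∧
      ∀ (d n k : ℕ), 1 ≤ d → 1 ≤ n → 1 ≤ k →
      ∀ (R α β δ ε : ℝ), 0 < R → 1 ≤ α → β ∈ Set.Ioc (0 : ℝ) 1 →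
        δ ∈ Set.Ioo (0 : ℝ) (1 / 2) → ε ∈ Set.Ioc (0 : ℝ) R →
      ∀ (x : Fin n → EuclideanSpace ℝ (Fin d)),
        (∀ i, x i ∈ Metric.closedBall (0 : EuclideanSpace ℝ (Fin d)) R) →
      ∀ (U : Fin n → Fin k → ℝ),
        (∀ i j, U i j ∈ Set.Icc (0 : ℝ) 1) →
        (∀ i, ∑ j, U i j = 1) →
        (∀ j : Fin k, β * n / k ≤ ∑ i, U i j) →
      ∀ m : ℕ,
        c * (R * (k : ℝ) ^ α / (ε * β ^ α)) ^ 4 * Real.log (k / δ) ≤ (m : ℝ) →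
      ∀ (Ω : Type) (_ : MeasurableSpace Ω) (P : Measure Ω),
        IsProbabilityMeasure P →
      ∀ I : Fin m → Ω → Fin n,
        iIndepFun (m := fun _ => (⊤ : MeasurableSpace (Fin n))) I P →
        (∀ (p : Fin m) (i : Fin n), P {ω | I p ω = i} = 1 / (n : ENNReal)) →
      ENNReal.ofReal (1 - δ) ≤
        P {ω | ∀ j : Fin k, 0 < ∑ p, U (I p ω) j ^ α ∧
          ‖((∑ p, U (I p ω) j ^ α)⁻¹ • ∑ p, (U (I p ω) j ^ α) • x (I p ω)) -
            ((∑ i, U i j ^ α)⁻¹ • ∑ i, (U i j ^ α) • x i)‖ ≤ ε} := by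
  classical
  refine ⟨3200, by norm_num, ?_⟩
  intro d n k hd hn hk R α β δ ε hR hα hβ hδ hε x hx U hU hUrow hUcol m hm Ω mΩ P hP I hIndep hUnif
  obtain ⟨hβ0, hβ1⟩ := hβ
  obtain ⟨hδ0, hδ2⟩ := hδ
  obtain ⟨hε0, hεR⟩ := hε
  have hk0 : (0:ℝ) < k := by exact_mod_cast hk
  have hk1 : (1:ℝ) ≤ k := by exact_mod_cast hk
  have hn0 : (0:ℝ) < n := by exact_mod_cast hn
  have hα0 : (0:ℝ) ≤ α := by linarith
  -- basic quantities
  set a : ℝ := (β / k) ^ α with ha_def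
  have ha0 : 0 < a := Real.rpow_pos_of_pos (by positivity) _
  have ha1 : a ≤ 1 := Real.rpow_le_one (by positivity) (by
    rw [div_le_one hk0]; linarith [hk1]) hα0
  set q : ℝ := ε * a / R with hq_def
  have hq0 : 0 < q := by positivity
  have hq1 : q ≤ 1 := by
    rw [hq_def, div_le_one hR]
    nlinarith [mul_le_of_le_one_right hε0.le ha1]
  set L : ℝ := Real.log (2 * k / δ) with hL_def
  have hkδ2 : (2:ℝ) ≤ k / δ := by
    rw [le_div_iff₀ hδ0]
    nlinarith
  have hL1 : 1 ≤ L := by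
    have h4 : (4:ℝ) ≤ 2 * k / δ := by
      rw [le_div_iff₀ hδ0]; nlinarith
    have := Real.log_le_log (by positivity : (0:ℝ) < 4) h4
    have hexp : Real.exp 1 ≤ 4 := by
      have := Real.exp_one_lt_d9
      linarith
    have h1 : (1:ℝ) ≤ Real.log 4 := by
      have := Real.log_le_log (Real.exp_pos 1) hexp
      rwa [Real.log_exp] at this
    linarith
  have hLlog : L ≤ 2 * Real.log (k / δ) := by
    have hkδ0 : (0:ℝ) < k / δ := by positivity
    have h1 : L = Real.log 2 + Real.log (k / δ) := by
      rw [hL_def, show (2 * k / δ) = 2 * (k / δ) by ring,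
        Real.log_mul (by norm_num) (ne_of_gt hkδ0)]
    have h2 : Real.log 2 ≤ Real.log (k / δ) :=
      Real.log_le_log (by norm_num) hkδ2
    linarith
  -- main sample size bound
  have hq_inv : R * (k:ℝ) ^ α / (ε * β ^ α) = 1 / q := by
    rw [hq_def, ha_def, Real.div_rpow hβ0.le hk0.le]
    have hkα : (0:ℝ) < (k:ℝ) ^ α := Real.rpow_pos_of_pos hk0 _
    have hβα : (0:ℝ) < β ^ α := Real.rpow_pos_of_pos hβ0 _
    field_simp
  clear_value a q L
  have hm1600 : 1600 * L / q ^ 2 ≤ (m:ℝ) := by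
    rw [hq_inv] at hm
    have hinv1 : 1 ≤ 1 / q := by rw [le_div_iff₀ hq0]; linarith
    have h1 : (1/q)^2 ≤ (1/q)^4 := pow_le_pow_right₀ hinv1 (by norm_num)
    have h2 : 0 < Real.log (k / δ) := by
      have := Real.log_le_log (by norm_num : (0:ℝ) < 2) hkδ2
      have h20 := Real.log_pos (by norm_num : (1:ℝ) < 2)
      linarith
    have h3 : 1600 * L / q ^ 2 ≤ 3200 * (1/q)^2 * Real.log (k/δ) := by
      have e1 : 3200 * (1/q)^2 * Real.log (k/δ) = 1600 * (2 * Real.log (k/δ)) / q ^ 2 := by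
        field_simp
        ring
      rw [e1]
      apply div_le_div_of_nonneg_right _ (by positivity)
      linarith
    have h4 : 3200 * (1/q)^2 * Real.log (k/δ) ≤ 3200 * (1/q)^4 * Real.log (k/δ) :=
      mul_le_mul_of_nonneg_right (mul_le_mul_of_nonneg_left h1 (by norm_num)) h2.le
    linarith
  have hq2 : q ^ 2 ≤ 1 := by
    calc q ^ 2 ≤ 1 ^ 2 := pow_le_pow_left₀ hq0.le hq1 2
      _ = 1 := one_pow 2
  have hLm : L ≤ (m:ℝ) := by
    have h5 : L ≤ 1600 * L / q ^ 2 := by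
      rw [le_div_iff₀ (by positivity : (0:ℝ) < q ^ 2)]
      calc L * q ^ 2 ≤ L * 1 := mul_le_mul_of_nonneg_left hq2 (by linarith)
        _ ≤ 1600 * L := by linarith
    linarith
  have hm0 : (0:ℝ) < m := lt_of_lt_of_le (by positivity) hm1600
  have hm1 : 1 ≤ m := Nat.cast_pos.mp hm0
  -- thresholds
  have hmL0 : (0:ℝ) ≤ (m:ℝ) * L := by positivity
  have hsqrt_mL : Real.sqrt ((m:ℝ) * L) ≤ q * m / 40 := by
    rw [show q * (m:ℝ) / 40 = Real.sqrt ((q * m / 40)^2) from (Real.sqrt_sq (by positivity)).symm]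
    apply Real.sqrt_le_sqrt
    have h6 : 1600 * L ≤ q^2 * m := by
      rw [div_le_iff₀ (by positivity : (0:ℝ) < q^2)] at hm1600
      linarith [hm1600]
    nlinarith [mul_le_mul_of_nonneg_right h6 hm0.le]
  have hsqrt_m_le : Real.sqrt (m:ℝ) ≤ Real.sqrt ((m:ℝ)*L) := by
    apply Real.sqrt_le_sqrt
    nlinarith [mul_le_mul_of_nonneg_left hL1 hm0.le]
  have hsqrt_m_nn : 0 ≤ Real.sqrt (m:ℝ) := Real.sqrt_nonneg _
  have hsqrt_mL_nn : 0 ≤ Real.sqrt ((m:ℝ)*L) := Real.sqrt_nonneg _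
  have hexpL : Real.exp (-L) = δ / (2*k) := by
    rw [Real.exp_neg, hL_def, Real.exp_log (by positivity), inv_div]
  set s1 : ℝ := 4 * Real.sqrt ((m:ℝ)*L) with hs1_def
  set s2 : ℝ := 8 * R * Real.sqrt ((m:ℝ)*L) with hs2_def
  have hs1_0 : 0 ≤ s1 := by positivity
  have hs2_0 : 0 ≤ s2 := by positivity
  have hsqm : Real.sqrt ((m:ℝ)*L) ≤ (m:ℝ) := by
    calc Real.sqrt ((m:ℝ)*L) ≤ Real.sqrt ((m:ℝ)^2) :=
          Real.sqrt_le_sqrt (by nlinarith [mul_le_mul_of_nonneg_left hLm hm0.le])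
      _ = (m:ℝ) := Real.sqrt_sq hm0.le
  have hs1_c : s1 ≤ 4 * (m:ℝ) * 1 := by rw [hs1_def]; nlinarith [hsqm]
  have hs2_c : s2 ≤ 4 * (m:ℝ) * (2*R) := by rw [hs2_def]; nlinarith [hsqm, hR]
  have hth1 : (1:ℝ) * Real.sqrt (m:ℝ) + s1 ≤ ε * a * m / (4*R) := by
    have heq : ε * a * (m:ℝ) / (4*R) = q * m / 4 := by
      rw [hq_def]; field_simp
    rw [heq]
    have : (1:ℝ) * Real.sqrt (m:ℝ) + s1 ≤ 5 * Real.sqrt ((m:ℝ)*L) := by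
      rw [hs1_def]; linarith [hsqrt_m_le]
    have h7 : (5:ℝ) * Real.sqrt ((m:ℝ)*L) ≤ 5 * (q * m / 40) := by linarith [hsqrt_mL]
    have h8 : (0:ℝ) ≤ q * m := by positivity
    linarith
  have hth2 : (2*R) * Real.sqrt (m:ℝ) + s2 ≤ ε * a * m / 4 := by
    have heq : ε * a * (m:ℝ) / 4 = R * (q * m / 4) := by
      rw [hq_def]; field_simp
    rw [heq]
    have h9 : (2*R) * Real.sqrt (m:ℝ) + s2 ≤ 10 * R * Real.sqrt ((m:ℝ)*L) := by
      rw [hs2_def]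
      nlinarith [hsqrt_m_le, hR, hsqrt_m_nn]
    have h10 : (10:ℝ) * R * Real.sqrt ((m:ℝ)*L) ≤ 10 * R * (q * m / 40) := by
      nlinarith [hsqrt_mL, hR]
    have h11 : (10:ℝ) * R * (q * m / 40) = R * (q * m / 4) * (5/8) * (4/5) * 2 := by ring
    nlinarith [hR, hq0, hm0]
  -- per-cluster centered variables and bad sets
  set ξ1 : Fin k → Fin n → ℝ :=
    fun j i' => U i' j ^ α - (∑ i'', U i'' j ^ α) / n with hξ1_def
  set ξ2 : Fin k → Fin n → EuclideanSpace ℝ (Fin d) :=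
    fun j i' => (U i' j ^ α) • x i' - (n:ℝ)⁻¹ • (∑ i'', (U i'' j ^ α) • x i'') with hξ2_def
  set E1 : Fin k → Finset (Fin m → Fin n) := fun j =>
    Finset.univ.filter fun i => (1:ℝ) * Real.sqrt (m:ℝ) + s1 ≤ ‖∑ p, ξ1 j (i p)‖ with hE1_def
  set E2 : Fin k → Finset (Fin m → Fin n) := fun j =>
    Finset.univ.filter fun i => (2*R) * Real.sqrt (m:ℝ) + s2 ≤ ‖∑ p, ξ2 j (i p)‖ with hE2_def
  -- elementary facts about the weights
  have hw01 : ∀ (i' : Fin n) (j : Fin k), U i' j ^ α ∈ Set.Icc (0:ℝ) 1 := by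
    intro i' j
    exact ⟨Real.rpow_nonneg (hU i' j).1 α, Real.rpow_le_one (hU i' j).1 (hU i' j).2 hα0⟩
  have hxR : ∀ i', ‖x i'‖ ≤ R := by
    intro i'
    have := hx i'
    rwa [Metric.mem_closedBall, dist_zero_right] at this
  have hA_low : ∀ j, (n:ℝ) * a ≤ ∑ i', U i' j ^ α := by
    intro j
    rw [ha_def]
    apply rpow_mean_le hn (fun i' => U i' j) (fun i' => hU i' j) hα (by positivity)
    rw [div_mul_eq_mul_div]
    exact hUcol j
  have hA_nn : ∀ j, (0:ℝ) ≤ ∑ i', U i' j ^ α := fun j =>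
    Finset.sum_nonneg fun i' _ => (hw01 i' j).1
  have hA_le : ∀ j, ∑ i', U i' j ^ α ≤ (n:ℝ) := by
    intro j
    calc ∑ i', U i' j ^ α ≤ ∑ _i' : Fin n, (1:ℝ) :=
          Finset.sum_le_sum fun i' _ => (hw01 i' j).2
      _ = (n:ℝ) := by simp
  have hVR : ∀ j, ‖∑ i'', (U i'' j ^ α) • x i''‖ ≤ R * ∑ i', U i' j ^ α := by
    intro j
    calc ‖∑ i'', (U i'' j ^ α) • x i''‖ ≤ ∑ i'', ‖(U i'' j ^ α) • x i''‖ := norm_sum_le _ _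
      _ ≤ ∑ i'', (U i'' j ^ α) * R := Finset.sum_le_sum fun i'' _ => by
          rw [norm_smul, Real.norm_eq_abs, abs_of_nonneg (hw01 i'' j).1]
          exact mul_le_mul_of_nonneg_left (hxR i'') (hw01 i'' j).1
      _ = R * ∑ i', U i' j ^ α := by rw [← Finset.sum_mul, mul_comm]
  have hξ1_0 : ∀ j, ∑ i', ξ1 j i' = 0 := by
    intro j
    simp only [hξ1_def]
    rw [Finset.sum_sub_distrib, Finset.sum_const, Finset.card_univ, Fintype.card_fin,
      nsmul_eq_mul]
    field_simp
    simp
  have hξ1_b : ∀ j i', ‖ξ1 j i'‖ ≤ (1:ℝ) := by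
    intro j i'
    simp only [hξ1_def]
    rw [Real.norm_eq_abs]
    have h1 := (hw01 i' j).1
    have h2 := (hw01 i' j).2
    have h3 : 0 ≤ (∑ i'', U i'' j ^ α) / n := div_nonneg (hA_nn j) hn0.le
    have h4 : (∑ i'', U i'' j ^ α) / n ≤ 1 := by
      rw [div_le_one hn0]; exact hA_le j
    rw [abs_le]
    constructor <;> linarith
  have hξ2_0 : ∀ j, ∑ i', ξ2 j i' = 0 := by
    intro j
    simp only [hξ2_def]
    rw [Finset.sum_sub_distrib, Finset.sum_const, Finset.card_univ, Fintype.card_fin,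
      ← Nat.cast_smul_eq_nsmul ℝ, smul_smul, mul_inv_cancel₀ (ne_of_gt hn0), one_smul,
      sub_self]
  have hξ2_b : ∀ j i', ‖ξ2 j i'‖ ≤ 2*R := by
    intro j i'
    simp only [hξ2_def]
    calc ‖(U i' j ^ α) • x i' - (n:ℝ)⁻¹ • (∑ i'', (U i'' j ^ α) • x i'')‖
        ≤ ‖(U i' j ^ α) • x i'‖ + ‖(n:ℝ)⁻¹ • (∑ i'', (U i'' j ^ α) • x i'')‖ := norm_sub_le _ _
      _ ≤ R + R := by
          apply add_le_add
          · rw [norm_smul, Real.norm_eq_abs, abs_of_nonneg (hw01 i' j).1]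
            calc (U i' j ^ α) * ‖x i'‖ ≤ 1 * R :=
                  mul_le_mul (hw01 i' j).2 (hxR i') (norm_nonneg _) zero_le_one
              _ = R := one_mul R
          · rw [norm_smul, Real.norm_eq_abs, abs_of_nonneg (by positivity : (0:ℝ) ≤ (n:ℝ)⁻¹)]
            calc (n:ℝ)⁻¹ * ‖∑ i'', (U i'' j ^ α) • x i''‖
                ≤ (n:ℝ)⁻¹ * (R * (n:ℝ)) := by
                  apply mul_le_mul_of_nonneg_left _ (by positivity)
                  exact le_trans (hVR j) (mul_le_mul_of_nonneg_left (hA_le j) hR.le)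
              _ = R := by field_simp
      _ = 2*R := by ring
  -- cardinality bounds for the bad sets
  have hE1card : ∀ j, ((E1 j).card : ℝ) ≤ (n:ℝ)^m * (δ/(2*k)) := by
    intro j
    have htc := tail_count (V := ℝ) hn (by norm_num : (0:ℝ) < 1) (hξ1_0 j) (hξ1_b j)
      hm1 hs1_0 hs1_c
    rw [hE1_def]
    refine le_trans htc ?_
    apply mul_le_mul_of_nonneg_left _ (by positivity)
    have he : -(s1^2) / (16 * (m:ℝ) * 1^2) = -L := by
      rw [hs1_def, mul_pow, Real.sq_sqrt hmL0]
      field_simp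
      ring
    rw [he, hexpL]
  have hE2card : ∀ j, ((E2 j).card : ℝ) ≤ (n:ℝ)^m * (δ/(2*k)) := by
    intro j
    have htc := tail_count (V := EuclideanSpace ℝ (Fin d)) hn
      (by positivity : (0:ℝ) < 2*R) (hξ2_0 j) (hξ2_b j) hm1 hs2_0 hs2_c
    rw [hE2_def]
    refine le_trans htc ?_
    apply mul_le_mul_of_nonneg_left _ (by positivity)
    have he : -(s2^2) / (16 * (m:ℝ) * (2*R)^2) = -L := by
      rw [hs2_def, show (8 * R * Real.sqrt ((m:ℝ)*L))^2
          = 64 * R^2 * (Real.sqrt ((m:ℝ)*L))^2 by ring, Real.sq_sqrt hmL0]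
      field_simp
      ring
    rw [he, hexpL]
  -- probability of hitting a bad finset
  set ι : Ω → (Fin m → Fin n) := fun ω p => I p ω with hι_def
  have hpre : ∀ E : Finset (Fin m → Fin n), ((E.card:ℝ) ≤ (n:ℝ)^m * (δ/(2*k))) →
      P {ω | ι ω ∈ E} ≤ ENNReal.ofReal (δ/(2*k)) := by
    intro E hE
    have hatom : ∀ i : Fin m → Fin n, P {ω | ι ω = i} = ((n:ℕ):ℝ≥0∞)⁻¹ ^ m := by
      intro i
      have h1 : {ω | ι ω = i} = ⋂ p, I p ⁻¹' {i p} := by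
        ext ω
        simp only [Set.mem_setOf_eq, Set.mem_iInter, Set.mem_preimage, Set.mem_singleton_iff,
          hι_def, funext_iff]
      have h2 := hIndep.measure_inter_preimage_eq_mul (S := Finset.univ)
        (sets := fun p => {i p}) (fun _ _ => trivial)
      rw [h1, show (⋂ p, I p ⁻¹' {i p}) = ⋂ p ∈ Finset.univ, I p ⁻¹' {i p} by simp, h2]
      have h3 : ∀ p : Fin m, P (I p ⁻¹' {i p}) = ((n:ℕ):ℝ≥0∞)⁻¹ := by
        intro p
        have h4 := hUnif p (i p)
        rw [one_div] at h4
        rw [show I p ⁻¹' {i p} = {ω | I p ω = i p} from rfl]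
        exact h4
      rw [Finset.prod_congr rfl (fun p _ => h3 p), Finset.prod_const, Finset.card_univ,
        Fintype.card_fin]
    have hsub : {ω | ι ω ∈ E} ⊆ ⋃ i ∈ E, {ω | ι ω = i} := by
      intro ω hω
      exact Set.mem_biUnion hω rfl
    calc P {ω | ι ω ∈ E} ≤ ∑ i ∈ E, P {ω | ι ω = i} :=
          le_trans (measure_mono hsub) (measure_biUnion_finset_le _ _)
      _ = (E.card : ℝ≥0∞) * ((n:ℕ):ℝ≥0∞)⁻¹ ^ m := by
          rw [Finset.sum_congr rfl (fun i _ => hatom i), Finset.sum_const, nsmul_eq_mul]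
      _ ≤ ENNReal.ofReal (δ/(2*k)) := by
          have e1 : ((n:ℕ):ℝ≥0∞)⁻¹ = ENNReal.ofReal ((n:ℝ)⁻¹) := by
            rw [ENNReal.ofReal_inv_of_pos hn0, ENNReal.ofReal_natCast]
          rw [e1, ← ENNReal.ofReal_pow (by positivity),
            show (E.card : ℝ≥0∞) = ENNReal.ofReal ((E.card : ℕ):ℝ) from
              (ENNReal.ofReal_natCast _).symm,
            ← ENNReal.ofReal_mul (by positivity)]
          apply ENNReal.ofReal_le_ofReal
          have e2 : (n:ℝ)^m * ((n:ℝ)⁻¹)^m = 1 := by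
            rw [← mul_pow, mul_inv_cancel₀ (ne_of_gt hn0), one_pow]
          calc (E.card : ℝ) * ((n:ℝ)⁻¹)^m
              ≤ ((n:ℝ)^m * (δ/(2*k))) * ((n:ℝ)⁻¹)^m :=
                mul_le_mul_of_nonneg_right hE (by positivity)
            _ = ((n:ℝ)^m * ((n:ℝ)⁻¹)^m) * (δ/(2*k)) := by ring
            _ = δ/(2*k) := by rw [e2, one_mul]
  -- the bad event
  set Bad : Set Ω := ⋃ j : Fin k, ({ω | ι ω ∈ E1 j} ∪ {ω | ι ω ∈ E2 j}) with hBad_def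
  have hBadP : P Bad ≤ ENNReal.ofReal δ := by
    calc P Bad ≤ ∑' j : Fin k, P ({ω | ι ω ∈ E1 j} ∪ {ω | ι ω ∈ E2 j}) :=
          measure_iUnion_le _
      _ ≤ ∑' _j : Fin k, (ENNReal.ofReal (δ/(2*k)) + ENNReal.ofReal (δ/(2*k))) := by
          apply ENNReal.tsum_le_tsum
          intro j
          calc P ({ω | ι ω ∈ E1 j} ∪ {ω | ι ω ∈ E2 j})
              ≤ P {ω | ι ω ∈ E1 j} + P {ω | ι ω ∈ E2 j} := measure_union_le _ _
            _ ≤ ENNReal.ofReal (δ/(2*k)) + ENNReal.ofReal (δ/(2*k)) :=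
                add_le_add (hpre _ (hE1card j)) (hpre _ (hE2card j))
      _ = ENNReal.ofReal δ := by
          rw [tsum_fintype, Finset.sum_const, Finset.card_univ, Fintype.card_fin,
            nsmul_eq_mul, ← ENNReal.ofReal_add (by positivity) (by positivity),
            show δ/(2*(k:ℝ)) + δ/(2*(k:ℝ)) = δ/(k:ℝ) by ring,
            show ((k:ℕ):ℝ≥0∞) = ENNReal.ofReal ((k:ℕ):ℝ) from (ENNReal.ofReal_natCast _).symm,
            ← ENNReal.ofReal_mul (by positivity)]
          congr 1
          field_simp
  -- on the complement of the bad event, all clusters are well estimated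
  have hincl : Badᶜ ⊆ {ω | ∀ j : Fin k, 0 < ∑ p, U (I p ω) j ^ α ∧
      ‖((∑ p, U (I p ω) j ^ α)⁻¹ • ∑ p, (U (I p ω) j ^ α) • x (I p ω)) -
        ((∑ i, U i j ^ α)⁻¹ • ∑ i, (U i j ^ α) • x i)‖ ≤ ε} := by
    intro ω hω
    simp only [hBad_def, Set.compl_iUnion, Set.mem_iInter, Set.mem_compl_iff, Set.mem_union,
      Set.mem_setOf_eq, not_or] at hω
    intro j
    obtain ⟨hb1, hb2⟩ := hω j
    have h1' : ‖∑ p, ξ1 j (ι ω p)‖ < (1:ℝ) * Real.sqrt (m:ℝ) + s1 := by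
      by_contra hc
      push_neg at hc
      exact hb1 (by rw [hE1_def]; exact Finset.mem_filter.2 ⟨Finset.mem_univ _, hc⟩)
    have h2' : ‖∑ p, ξ2 j (ι ω p)‖ < (2*R) * Real.sqrt (m:ℝ) + s2 := by
      by_contra hc
      push_neg at hc
      exact hb2 (by rw [hE2_def]; exact Finset.mem_filter.2 ⟨Finset.mem_univ _, hc⟩)
    have hDet := cluster_det (d := d) hn hm1 hR hε0 hεR ha0
      (fun i' => U i' j ^ α) (fun i' => hw01 i' j) x hxR (hA_low j) (ι ω)
      (by
        have := le_trans h1'.le hth1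
        rw [hξ1_def] at this
        simpa [Real.norm_eq_abs] using this)
      (by
        have := le_trans h2'.le hth2
        rw [hξ2_def] at this
        simpa using this)
    exact hDet
  -- conclusion
  have h1P : (1:ℝ≥0∞) ≤ P Bad + P {ω | ∀ j : Fin k, 0 < ∑ p, U (I p ω) j ^ α ∧
      ‖((∑ p, U (I p ω) j ^ α)⁻¹ • ∑ p, (U (I p ω) j ^ α) • x (I p ω)) -
        ((∑ i, U i j ^ α)⁻¹ • ∑ i, (U i j ^ α) • x i)‖ ≤ ε} := by
    have hsub2 : (Set.univ : Set Ω) ⊆ Bad ∪ {ω | ∀ j : Fin k, 0 < ∑ p, U (I p ω) j ^ α ∧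
        ‖((∑ p, U (I p ω) j ^ α)⁻¹ • ∑ p, (U (I p ω) j ^ α) • x (I p ω)) -
          ((∑ i, U i j ^ α)⁻¹ • ∑ i, (U i j ^ α) • x i)‖ ≤ ε} := by
      intro ω _
      rcases Classical.em (ω ∈ Bad) with h | h
      · exact Or.inl h
      · exact Or.inr (hincl h)
    calc (1:ℝ≥0∞) = P Set.univ := measure_univ.symm
      _ ≤ P (Bad ∪ _) := measure_mono hsub2
      _ ≤ P Bad + P _ := measure_union_le _ _
  have hfinal : ENNReal.ofReal (1-δ) + ENNReal.ofReal δ ≤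
      P {ω | ∀ j : Fin k, 0 < ∑ p, U (I p ω) j ^ α ∧
        ‖((∑ p, U (I p ω) j ^ α)⁻¹ • ∑ p, (U (I p ω) j ^ α) • x (I p ω)) -
          ((∑ i, U i j ^ α)⁻¹ • ∑ i, (U i j ^ α) • x i)‖ ≤ ε} + ENNReal.ofReal δ := by
    rw [← ENNReal.ofReal_add (by linarith) hδ0.le, show (1-δ)+δ = (1:ℝ) by ring,
      ENNReal.ofReal_one]
    calc (1:ℝ≥0∞) ≤ P Bad + P _ := h1P
      _ ≤ ENNReal.ofReal δ + P _ := add_le_add_left hBadP _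
      _ = P _ + ENNReal.ofReal δ := add_comm _ _
  exact (ENNReal.add_le_add_iff_right ENNReal.ofReal_ne_top).1 hfinal
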